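/- For all positive integers a and b there exists a positive integer n with n ≥ 2 such that every set A of permutations of {1,…,n} with |A| ≤ a satisfies d_2(A) ≥ b − 1. -/

import Mathlib

/-- `σ(≤P) = {s : σ s ≤ max_{j ∈ P} σ j}`. -/
def permLe {n : ℕ} (σ : Equiv.Perm (Fin n)) (P : Finset (Fin n)) : Finset (Fin n) :=
  Finset.univ.filter fun s => ∃ j ∈ P, σ s ≤ σ j

/-- The `P`-dependent set `⟨A;P⟩ = ⋂_{σ ∈ A} σ(≤P)`. -/
def depSet {n : ℕ} (A : Finset (Equiv.Perm (Fin n))) (P : Finset (Fin n)) : Finset (Fin n) :=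
  Finset.univ.filter fun s => ∀ σ ∈ A, ∃ j ∈ P, σ s ≤ σ j

/-- The `P`-dependency `d(A;P) = |⟨A;P⟩| - |P|`. -/
def dep {n : ℕ} (A : Finset (Equiv.Perm (Fin n))) (P : Finset (Fin n)) : ℕ :=
  (depSet A P).card - P.card

/-- The `p`-tuple dependency `d_p(A) = max {d(A;P) : |P| = p}`. -/
def tupleDep {n : ℕ} (A : Finset (Equiv.Perm (Fin n))) (p : ℕ) : ℕ :=
  (Finset.powersetCard p (Finset.univ : Finset (Fin n))).sup (dep A)


def upLen {n : ℕ} (f : Fin n → Fin n) (S : Finset (Fin n)) (x : Fin n) : ℕ :=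
  1 + ((S.filter fun y => y < x ∧ f y < f x).attach.sup fun y => upLen f S y.1)
termination_by x.val
decreasing_by
  have h := y.2
  simp only [Finset.mem_filter] at h
  exact h.2.1

lemma one_le_upLen {n : ℕ} (f : Fin n → Fin n) (S : Finset (Fin n)) (x : Fin n) :
    1 ≤ upLen f S x := by
  rw [upLen]; omega

lemma upLen_lt {n : ℕ} (f : Fin n → Fin n) (S : Finset (Fin n)) {x y : Fin n}
    (hx : x ∈ S) (hxy : x < y) (hf : f x < f y) : upLen f S x < upLen f S y := by
  conv_rhs => rw [upLen]
  have hx' : x ∈ S.filter (fun z => z < y ∧ f z < f y) := by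
    simp [hx, hxy, hf]
  have h := Finset.le_sup (f := fun z : {z // z ∈ S.filter (fun z => z < y ∧ f z < f y)} =>
    upLen f S z.1) (Finset.mem_attach _ ⟨x, hx'⟩)
  simp only at h
  omega

lemma upLen_extract_aux {n : ℕ} (f : Fin n → Fin n) (S : Finset (Fin n)) :
    ∀ (k : ℕ), ∀ x ∈ S, x.val < k → ∃ T : Finset (Fin n), T ⊆ S ∧ T.card = upLen f S x ∧
      (∀ z ∈ T, z ≤ x ∧ f z ≤ f x) ∧ (∀ a ∈ T, ∀ b ∈ T, a < b → f a < f b) := by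
  intro k
  induction k with
  | zero => intro x _ h; omega
  | succ k ih =>
    intro x hx hxk
    rcases (S.filter fun y => y < x ∧ f y < f x).eq_empty_or_nonempty with he | hne
    · refine ⟨{x}, by simpa using hx, ?_, ?_, ?_⟩
      · rw [upLen, he]; simp
      · intro z hz; simp only [Finset.mem_singleton] at hz; subst hz
        exact ⟨le_refl _, le_refl _⟩
      · intro p hp q hq hpq; simp only [Finset.mem_singleton] at hp hq
        subst hp; subst hq; exact absurd hpq (lt_irrefl _)
    · obtain ⟨y, _, hsup⟩ := Finset.exists_mem_eq_sup
        (S.filter fun y => y < x ∧ f y < f x).attach (by simpa using hne)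
        (fun z => upLen f S z.1)
      have hy' := y.2
      simp only [Finset.mem_filter] at hy'
      obtain ⟨hyS, hyx, hfyx⟩ := hy'
      have hyk : (y.1 : Fin n).val < k := by
        have h1 : (y.1 : Fin n).val < x.val := hyx
        omega
      obtain ⟨T', hT'S, hT'card, hT'le, hT'chain⟩ := ih y.1 hyS hyk
      have hxT' : x ∉ T' := fun h => absurd ((hT'le x h).1.trans_lt hyx) (lt_irrefl _)
      refine ⟨insert x T', ?_, ?_, ?_, ?_⟩
      · intro z hz; rcases Finset.mem_insert.mp hz with h | h
        · subst h; exact hx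
        · exact hT'S h
      · rw [Finset.card_insert_of_notMem hxT', hT'card]
        conv_rhs => rw [upLen]
        rw [hsup]
        omega
      · intro z hz; rcases Finset.mem_insert.mp hz with h | h
        · subst h; exact ⟨le_refl _, le_refl _⟩
        · exact ⟨((hT'le z h).1.trans hyx.le), ((hT'le z h).2.trans hfyx.le)⟩
      · intro p hp q hq hpq
        rcases Finset.mem_insert.mp hp with h1 | h1 <;> rcases Finset.mem_insert.mp hq with h2 | h2
        · subst h1; subst h2; exact absurd hpq (lt_irrefl _)
        · subst h1; exact absurd (((hT'le q h2).1.trans hyx.le).trans_lt hpq) (lt_irrefl _)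
        · subst h2; exact (hT'le p h1).2.trans_lt hfyx
        · exact hT'chain p h1 q h2 hpq

lemma upLen_extract {n : ℕ} (f : Fin n → Fin n) (S : Finset (Fin n)) {x : Fin n} (hx : x ∈ S) :
    ∃ T : Finset (Fin n), T ⊆ S ∧ T.card = upLen f S x ∧
      (∀ a ∈ T, ∀ b ∈ T, a < b → f a < f b) := by
  obtain ⟨T, h1, h2, _, h4⟩ := upLen_extract_aux f S (x.val + 1) x hx (Nat.lt_succ_self _)
  exact ⟨T, h1, h2, h4⟩

/-- Erdős–Szekeres. -/
lemma erdos_szekeres {n : ℕ} (f : Fin n → Fin n) (hf : Function.Injective f)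
    (S : Finset (Fin n)) (r : ℕ) (h : r * r < S.card) :
    ∃ T ⊆ S, r < T.card ∧
      ((∀ a ∈ T, ∀ b ∈ T, a < b → f a < f b) ∨ (∀ a ∈ T, ∀ b ∈ T, a < b → f b < f a)) := by
  by_cases hup : ∃ x ∈ S, r < upLen f S x
  · obtain ⟨x, hx, hr⟩ := hup
    obtain ⟨T, h1, h2, h3⟩ := upLen_extract f S hx
    exact ⟨T, h1, h2 ▸ hr, Or.inl h3⟩
  by_cases hdn : ∃ x ∈ S, r < upLen (fun z => (f z).rev) S x
  · obtain ⟨x, hx, hr⟩ := hdn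
    obtain ⟨T, h1, h2, h3⟩ := upLen_extract (fun z => (f z).rev) S hx
    refine ⟨T, h1, h2 ▸ hr, Or.inr fun p hp q hq hpq => ?_⟩
    exact Fin.rev_lt_rev.mp (h3 p hp q hq hpq)
  push_neg at hup hdn
  exfalso
  have hcard : S.card ≤ (Finset.Icc 1 r ×ˢ Finset.Icc 1 r).card := by
    apply Finset.card_le_card_of_injOn
      (fun x => (upLen f S x, upLen (fun z => (f z).rev) S x))
    · intro x hx
      simp only [Finset.mem_coe, Finset.mem_product, Finset.mem_Icc]
      exact ⟨⟨one_le_upLen _ _ _, hup x hx⟩, ⟨one_le_upLen _ _ _, hdn x hx⟩⟩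
    · intro x hx y hy hxy
      simp only [Prod.mk.injEq] at hxy
      rcases lt_trichotomy x y with hlt | heq | hlt
      · rcases (hf.ne (hlt.ne) : f x ≠ f y).lt_or_gt with hflt | hflt
        · exact absurd hxy.1 (upLen_lt f S hx hlt hflt).ne
        · have : (f x).rev < (f y).rev := Fin.rev_lt_rev.mpr hflt
          exact absurd hxy.2 (upLen_lt _ S hx hlt this).ne
      · exact heq
      · rcases (hf.ne (hlt.ne) : f y ≠ f x).lt_or_gt with hflt | hflt
        · exact absurd hxy.1.symm (upLen_lt f S hy hlt hflt).ne
        · have : (f y).rev < (f x).rev := Fin.rev_lt_rev.mpr hflt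
          exact absurd hxy.2.symm (upLen_lt _ S hy hlt this).ne
  rw [Finset.card_product, Nat.card_Icc] at hcard
  simp at hcard
  omega

lemma iter_mono {n : ℕ} (l : List (Equiv.Perm (Fin n))) (r : ℕ) :
    ∀ S : Finset (Fin n), r ^ (2 ^ l.length) < S.card →
    ∃ T ⊆ S, r < T.card ∧ ∀ σ ∈ l,
      ((∀ p ∈ T, ∀ q ∈ T, p < q → σ p < σ q) ∨ (∀ p ∈ T, ∀ q ∈ T, p < q → σ q < σ p)) := by
  induction l with
  | nil =>
    intro S h
    exact ⟨S, Finset.Subset.refl _, by simpa using h, by simp⟩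
  | cons σ l ih =>
    intro S h
    have h2 : (r ^ 2 ^ l.length) * (r ^ 2 ^ l.length) < S.card := by
      have : r ^ 2 ^ (σ :: l).length = r ^ 2 ^ l.length * r ^ 2 ^ l.length := by
        rw [← pow_add]
        congr 1
        simp [List.length_cons, pow_succ]
        ring
      rwa [this] at h
    obtain ⟨T₁, hT₁S, hcard, hmono⟩ := erdos_szekeres σ σ.injective S _ h2
    obtain ⟨T, hTT₁, hr, hl⟩ := ih T₁ hcard
    refine ⟨T, hTT₁.trans hT₁S, hr, ?_⟩
    intro τ hτ
    rcases List.mem_cons.mp hτ with hτ | hτ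
    · subst hτ
      rcases hmono with hm | hm
      · exact Or.inl fun p hp q hq hpq => hm p (hTT₁ hp) q (hTT₁ hq) hpq
      · exact Or.inr fun p hp q hq hpq => hm p (hTT₁ hp) q (hTT₁ hq) hpq
    · exact hl τ hτ

theorem pair_dependency_large (a b : ℕ) (ha : 0 < a) (hb : 0 < b) :
    ∃ n : ℕ, 2 ≤ n ∧
      ∀ A : Finset (Equiv.Perm (Fin n)), A.card ≤ a → b - 1 ≤ tupleDep A 2 := by
  refine ⟨b ^ 2 ^ a + 2, by omega, ?_⟩
  set n := b ^ 2 ^ a + 2 with hn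
  intro A hA
  have hbig : b ^ 2 ^ A.toList.length < (Finset.univ : Finset (Fin n)).card := by
    rw [Finset.card_univ, Fintype.card_fin, Finset.length_toList]
    have h1 : b ^ 2 ^ A.card ≤ b ^ 2 ^ a :=
      Nat.pow_le_pow_right hb (Nat.pow_le_pow_right (by norm_num) hA)
    omega
  obtain ⟨T, _, hTcard, hTmono⟩ := iter_mono A.toList b Finset.univ hbig
  have hTne : T.Nonempty := Finset.card_pos.mp (by omega)
  have hT1 : 1 < T.card := by omega
  set x := T.min' hTne with hx
  set y := T.max' hTne with hy
  have hxy : x < y := Finset.min'_lt_max'_of_card T hT1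
  set P : Finset (Fin n) := {x, y} with hP
  have hPcard : P.card = 2 := Finset.card_pair hxy.ne
  have hsub : T ⊆ depSet A P := by
    intro s hs
    rw [depSet, Finset.mem_filter]
    refine ⟨Finset.mem_univ _, fun σ hσ => ?_⟩
    have hσ' : σ ∈ A.toList := (Finset.mem_toList).mpr hσ
    rcases hTmono σ hσ' with hm | hm
    · refine ⟨y, by simp [hP], ?_⟩
      rcases (Finset.le_max' T s hs).lt_or_eq with h | h
      · exact (hm s hs y (T.max'_mem hTne) h).le
      · rw [h]
    · refine ⟨x, by simp [hP], ?_⟩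
      rcases (Finset.min'_le T s hs).lt_or_eq with h | h
      · exact (hm x (T.min'_mem hTne) s hs h).le
      · rw [← h]
  have hcard : b + 1 ≤ (depSet A P).card := by
    have := Finset.card_le_card hsub
    omega
  have hdep : b - 1 ≤ dep A P := by
    rw [dep, hPcard]
    omega
  refine le_trans hdep (Finset.le_sup ?_)
  exact Finset.mem_powersetCard.mpr ⟨Finset.subset_univ _, hPcard⟩
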